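/- Ceva's theorem in the hyperbolic plane: if T is a point not on any side line of a hyperbolic triangle ABC such that line AT meets BC in Q, line BT meets CA in R, and line CT meets AB in P, then s(A,P,B)·s(B,Q,C)·s(C,R,A) = 1, where s(X,Z,Y) = ± sinh(d(X,Z))/sinh(d(Z,Y)) with sign determined by betweenness. -/

import Mathlib

open Real Classical

/-- Lorentz bilinear form on ℝ³. -/
def lorentz (P Q : Fin 3 → ℝ) : ℝ := P 0 * Q 0 - P 1 * Q 1 - P 2 * Q 2

/-- Points of the hyperboloid model of H². -/
def onH (P : Fin 3 → ℝ) : Prop := 0 < P 0 ∧ lorentz P P = 1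

/-- Inverse hyperbolic cosine. -/
noncomputable def arcosh (x : ℝ) : ℝ := Real.log (x + Real.sqrt (x ^ 2 - 1))

/-- Hyperbolic distance in the hyperboloid model. -/
noncomputable def dH (P Q : Fin 3 → ℝ) : ℝ := _root_.arcosh (lorentz P Q)

/-- `P` lies between `A` and `B` on their common hyperbolic line (nonnegative
cone combination in the hyperboloid model). -/
def BtwH (A P B : Fin 3 → ℝ) : Prop := ∃ s t : ℝ, 0 ≤ s ∧ 0 ≤ t ∧ P = s • A + t • B

/-- Signed simple ratio of three distinct collinear points of H². -/
noncomputable def sRatio (A P B : Fin 3 → ℝ) : ℝ :=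
  (if BtwH A P B then 1 else -1) * (Real.sinh (dH A P) / Real.sinh (dH P B))

lemma lorentz_comm (X Y : Fin 3 → ℝ) : lorentz X Y = lorentz Y X := by
  unfold lorentz; ring

lemma lorentz_expand (X A B : Fin 3 → ℝ) (s t : ℝ) :
    lorentz X (s • A + t • B) = s * lorentz X A + t * lorentz X B := by
  simp [lorentz]; ring

lemma lorentz_self_expand (A B : Fin 3 → ℝ) (s t : ℝ) :
    lorentz (s • A + t • B) (s • A + t • B)
      = s ^ 2 * lorentz A A + 2 * s * t * lorentz A B + t ^ 2 * lorentz B B := by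
  simp [lorentz]; ring

lemma lorentz_ge_one {A B : Fin 3 → ℝ} (hA : onH A) (hB : onH B) : 1 ≤ lorentz A B := by
  obtain ⟨ha0, ha⟩ := hA
  obtain ⟨hb0, hb⟩ := hB
  unfold lorentz at *
  nlinarith [sq_nonneg (A 1 * B 2 - A 2 * B 1), sq_nonneg (A 1 - B 1), sq_nonneg (A 2 - B 2),
    mul_pos ha0 hb0, sq_nonneg (A 0 * B 0 - 1 - A 1 * B 1 - A 2 * B 2),
    sq_nonneg (A 0 * B 0 + 1 + A 1 * B 1 + A 2 * B 2)]

lemma lorentz_eq_one {A B : Fin 3 → ℝ} (hA : onH A) (hB : onH B)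
    (h : lorentz A B = 1) : A = B := by
  obtain ⟨ha0, ha⟩ := hA
  obtain ⟨hb0, hb⟩ := hB
  unfold lorentz at *
  have h1 : A 1 = B 1 := by
    nlinarith [sq_nonneg (A 1 * B 2 - A 2 * B 1), sq_nonneg (A 1 - B 1), sq_nonneg (A 2 - B 2),
      mul_pos ha0 hb0]
  have h2 : A 2 = B 2 := by
    nlinarith [sq_nonneg (A 1 * B 2 - A 2 * B 1), sq_nonneg (A 1 - B 1), sq_nonneg (A 2 - B 2),
      mul_pos ha0 hb0]
  have h0 : A 0 = B 0 := by nlinarith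
  funext i
  fin_cases i <;> assumption

lemma sinh_dH {A B : Fin 3 → ℝ} (h : 1 ≤ lorentz A B) :
    Real.sinh (dH A B) = Real.sqrt ((lorentz A B) ^ 2 - 1) := by
  set c := lorentz A B with hc
  have h1 : (0:ℝ) ≤ c ^ 2 - 1 := by nlinarith
  have hs : Real.sqrt (c ^ 2 - 1) ^ 2 = c ^ 2 - 1 := Real.sq_sqrt h1
  have hsnn : 0 ≤ Real.sqrt (c ^ 2 - 1) := Real.sqrt_nonneg _
  have hy : 0 < c + Real.sqrt (c ^ 2 - 1) := by nlinarith
  have hinv : (c + Real.sqrt (c ^ 2 - 1))⁻¹ = c - Real.sqrt (c ^ 2 - 1) :=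
    inv_eq_of_mul_eq_one_right (by nlinarith)
  rw [dH, _root_.arcosh, ← hc, Real.sinh_log hy, hinv]
  ring

lemma sRatio_coeff (A B P : Fin 3 → ℝ) (hA : onH A) (hB : onH B) (hP : onH P)
    (hind : ∀ a b : ℝ, a • A + b • B = 0 → a = 0 ∧ b = 0)
    (s t : ℝ) (hs : s ≠ 0) (ht : t ≠ 0) (hPst : P = s • A + t • B) :
    sRatio A P B = t / s := by
  set c := lorentz A B with hcdef
  have hAB : A ≠ B := by
    intro h
    have := (hind 1 (-1) (by rw [h]; module)).1
    norm_num at this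
  have hc1 : 1 ≤ c := lorentz_ge_one hA hB
  have hc : 1 < c := lt_of_le_of_ne hc1 (fun h => hAB (lorentz_eq_one hA hB h.symm))
  have hAP : lorentz A P = s + t * c := by
    rw [hPst, lorentz_expand, hA.2]; ring
  have hPB : lorentz P B = s * c + t := by
    rw [lorentz_comm, hPst, lorentz_expand, lorentz_comm B A, hB.2]; ring
  have hPP : s ^ 2 + 2 * s * t * c + t ^ 2 = 1 := by
    have h2 := hP.2
    rw [hPst, lorentz_self_expand, hA.2, hB.2] at h2
    nlinarith [h2]
  have hAP1 : 1 ≤ s + t * c := hAP ▸ lorentz_ge_one hA hP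
  have hPB1 : 1 ≤ s * c + t := hPB ▸ lorentz_ge_one hP hB
  have hsq : 0 < Real.sqrt (c ^ 2 - 1) := Real.sqrt_pos.mpr (by nlinarith)
  have hsinhAP : Real.sinh (dH A P) = |t| * Real.sqrt (c ^ 2 - 1) := by
    rw [sinh_dH (hAP ▸ lorentz_ge_one hA hP), hAP]
    have h3 : (s + t * c) ^ 2 - 1 = t ^ 2 * (c ^ 2 - 1) := by nlinarith
    rw [h3, Real.sqrt_mul (sq_nonneg t), Real.sqrt_sq_eq_abs]
  have hsinhPB : Real.sinh (dH P B) = |s| * Real.sqrt (c ^ 2 - 1) := by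
    rw [sinh_dH (hPB ▸ lorentz_ge_one hP hB), hPB]
    have h3 : (s * c + t) ^ 2 - 1 = s ^ 2 * (c ^ 2 - 1) := by nlinarith
    rw [h3, Real.sqrt_mul (sq_nonneg s), Real.sqrt_sq_eq_abs]
  have habs : Real.sinh (dH A P) / Real.sinh (dH P B) = |t| / |s| := by
    rw [hsinhAP, hsinhPB, mul_div_mul_right _ _ (ne_of_gt hsq)]
  have hcoe : ∀ s' t' : ℝ, P = s' • A + t' • B → s' = s ∧ t' = t := by
    intro s' t' heq
    have h2 : s • A + t • B = s' • A + t' • B := hPst.symm.trans heq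
    have key : (s' - s) • A + (t' - t) • B = 0 := by
      rw [sub_smul, sub_smul, sub_add_sub_comm, h2, sub_self]
    have h4 := hind _ _ key
    constructor <;> linarith [h4.1, h4.2]
  have hnotneg : ¬(s < 0 ∧ t < 0) := by
    rintro ⟨hs', ht'⟩
    nlinarith
  rcases lt_or_gt_of_ne hs with hsneg | hspos
  · have htpos : 0 < t := by
      rcases lt_or_gt_of_ne ht with h | h
      · exact absurd ⟨hsneg, h⟩ hnotneg
      · exact h
    have hnb : ¬ BtwH A P B := by
      rintro ⟨s', t', hs', ht', heq⟩
      have := (hcoe s' t' heq).1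
      linarith
    rw [sRatio, if_neg hnb, habs, abs_of_pos htpos, abs_of_neg hsneg, div_neg]
    ring
  · rcases lt_or_gt_of_ne ht with htneg | htpos
    · have hnb : ¬ BtwH A P B := by
        rintro ⟨s', t', hs', ht', heq⟩
        have := (hcoe s' t' heq).2
        linarith
      rw [sRatio, if_neg hnb, habs, abs_of_neg htneg, abs_of_pos hspos, neg_div]
      ring
    · have hb : BtwH A P B := ⟨s, t, le_of_lt hspos, le_of_lt htpos, hPst⟩
      rw [sRatio, if_pos hb, habs, abs_of_pos htpos, abs_of_pos hspos, one_mul]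

/-- Ceva's theorem in the hyperbolic plane: if `T` is a point not
on any side line of a nondegenerate triangle `A B C` such that line `AT` meets
`BC` in `Q`, line `BT` meets `CA` in `R`, and line `CT` meets `AB` in `P`, then
s(A,P,B)·s(B,Q,C)·s(C,R,A) = 1. -/
theorem hyperbolic_ceva (A B C P Q R T : Fin 3 → ℝ)
    (hA : onH A) (hB : onH B) (hC : onH C)
    (hP : onH P) (hQ : onH Q) (hR : onH R) (hT : onH T)
    (hABC : LinearIndependent ℝ ![A, B, C])
    (hTAB : T ∉ Submodule.span ℝ ({A, B} : Set (Fin 3 → ℝ)))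
    (hTBC : T ∉ Submodule.span ℝ ({B, C} : Set (Fin 3 → ℝ)))
    (hTCA : T ∉ Submodule.span ℝ ({C, A} : Set (Fin 3 → ℝ)))
    (hQmem : Q ∈ Submodule.span ℝ ({A, T} : Set (Fin 3 → ℝ)) ∧
             Q ∈ Submodule.span ℝ ({B, C} : Set (Fin 3 → ℝ)))
    (hRmem : R ∈ Submodule.span ℝ ({B, T} : Set (Fin 3 → ℝ)) ∧
             R ∈ Submodule.span ℝ ({C, A} : Set (Fin 3 → ℝ)))
    (hPmem : P ∈ Submodule.span ℝ ({C, T} : Set (Fin 3 → ℝ)) ∧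
             P ∈ Submodule.span ℝ ({A, B} : Set (Fin 3 → ℝ))) :
    sRatio A P B * sRatio B Q C * sRatio C R A = 1 := by
  -- coefficient-equality form of linear independence
  have h3 : ∀ a b c : ℝ, a • A + b • B + c • C = 0 → a = 0 ∧ b = 0 ∧ c = 0 := by
    intro a b c h
    have := Fintype.linearIndependent_iff.mp hABC ![a, b, c]
      (by simpa [Fin.sum_univ_three] using h)
    exact ⟨this 0, this 1, this 2⟩
  have hindAB : ∀ a b : ℝ, a • A + b • B = 0 → a = 0 ∧ b = 0 := by
    intro a b h
    have := h3 a b 0 (by simpa using h)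
    exact ⟨this.1, this.2.1⟩
  have hindBC : ∀ a b : ℝ, a • B + b • C = 0 → a = 0 ∧ b = 0 := by
    intro a b h
    have := h3 0 a b (by simpa using h)
    exact this.2
  have hindCA : ∀ a b : ℝ, a • C + b • A = 0 → a = 0 ∧ b = 0 := by
    intro a b h
    have := h3 b 0 a (by rw [zero_smul, add_zero, add_comm]; exact h)
    exact ⟨this.2.2, this.1⟩
  -- decompose T in the basis A, B, C
  obtain ⟨t1, t2, t3, hT3⟩ : ∃ t1 t2 t3 : ℝ, T = t1 • A + t2 • B + t3 • C := by
    have hcard : Fintype.card (Fin 3) = Module.finrank ℝ (Fin 3 → ℝ) := by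
      simp [Module.finrank_fin_fun]
    let bas := basisOfLinearIndependentOfCardEqFinrank hABC hcard
    have hco : ⇑bas = ![A, B, C] := coe_basisOfLinearIndependentOfCardEqFinrank hABC hcard
    have hrepr := bas.sum_repr T
    rw [Fin.sum_univ_three, hco] at hrepr
    simp only [Matrix.cons_val_zero, Matrix.cons_val_one, Matrix.head_cons,
      Matrix.cons_val_two, Matrix.tail_cons] at hrepr
    exact ⟨bas.repr T 0, bas.repr T 1, bas.repr T 2, hrepr.symm⟩
  have ht1 : t1 ≠ 0 := by
    intro h
    exact hTBC (Submodule.mem_span_pair.mpr ⟨t2, t3, by rw [hT3, h]; module⟩)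
  have ht2 : t2 ≠ 0 := by
    intro h
    exact hTCA (Submodule.mem_span_pair.mpr ⟨t3, t1, by rw [hT3, h]; module⟩)
  have ht3 : t3 ≠ 0 := by
    intro h
    exact hTAB (Submodule.mem_span_pair.mpr ⟨t1, t2, by rw [hT3, h]; module⟩)
  -- P
  obtain ⟨u, v, hPuv⟩ := Submodule.mem_span_pair.mp hPmem.2
  obtain ⟨x, y, hPxy⟩ := Submodule.mem_span_pair.mp hPmem.1
  have hPco : u = y * t1 ∧ v = y * t2 := by
    have key : (u - y * t1) • A + (v - y * t2) • B + (-x - y * t3) • C = 0 := by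
      have h2 : u • A + v • B = x • C + y • T := hPuv.trans hPxy.symm
      rw [hT3] at h2
      have : x • C + y • (t1 • A + t2 • B + t3 • C)
          = (y * t1) • A + (y * t2) • B + (x + y * t3) • C := by module
      rw [this] at h2
      rw [sub_smul, sub_smul]
      have expand : (-x - y * t3) • C = -((x + y * t3) • C) := by module
      rw [expand]
      rw [show u • A - (y * t1) • A + (v • B - (y * t2) • B) + -((x + y * t3) • C)
          = (u • A + v • B) - ((y * t1) • A + (y * t2) • B + (x + y * t3) • C) by module, h2,
        sub_self]
    have h4 := h3 _ _ _ key
    constructor <;> linarith [h4.1, h4.2.1]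
  have hy : y ≠ 0 := by
    intro h
    have hP0 : P = 0 := by rw [← hPuv, hPco.1, hPco.2, h]; simp
    have := hP.2
    rw [hP0] at this
    simp [lorentz] at this
  have hsP : sRatio A P B = t2 / t1 := by
    rw [sRatio_coeff A B P hA hB hP hindAB (y * t1) (y * t2)
      (mul_ne_zero hy ht1) (mul_ne_zero hy ht2)
      (by rw [← hPco.1, ← hPco.2]; exact hPuv.symm)]
    rw [mul_div_mul_left _ _ hy]
  -- Q
  obtain ⟨u', v', hQuv⟩ := Submodule.mem_span_pair.mp hQmem.2
  obtain ⟨x', y', hQxy⟩ := Submodule.mem_span_pair.mp hQmem.1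
  have hQco : u' = y' * t2 ∧ v' = y' * t3 := by
    have key : (-x' - y' * t1) • A + (u' - y' * t2) • B + (v' - y' * t3) • C = 0 := by
      have h2 : u' • B + v' • C = x' • A + y' • T := hQuv.trans hQxy.symm
      rw [hT3] at h2
      rw [show (-x' - y' * t1) • A + (u' - y' * t2) • B + (v' - y' * t3) • C
          = (u' • B + v' • C) - (x' • A + y' • (t1 • A + t2 • B + t3 • C)) by module, h2,
        sub_self]
    have h4 := h3 _ _ _ key
    constructor <;> linarith [h4.2.1, h4.2.2]
  have hy' : y' ≠ 0 := by
    intro h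
    have hQ0 : Q = 0 := by rw [← hQuv, hQco.1, hQco.2, h]; simp
    have := hQ.2
    rw [hQ0] at this
    simp [lorentz] at this
  have hsQ : sRatio B Q C = t3 / t2 := by
    rw [sRatio_coeff B C Q hB hC hQ hindBC (y' * t2) (y' * t3)
      (mul_ne_zero hy' ht2) (mul_ne_zero hy' ht3)
      (by rw [← hQco.1, ← hQco.2]; exact hQuv.symm)]
    rw [mul_div_mul_left _ _ hy']
  -- R
  obtain ⟨u'', v'', hRuv⟩ := Submodule.mem_span_pair.mp hRmem.2
  obtain ⟨x'', y'', hRxy⟩ := Submodule.mem_span_pair.mp hRmem.1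
  have hRco : u'' = y'' * t3 ∧ v'' = y'' * t1 := by
    have key : (v'' - y'' * t1) • A + (-x'' - y'' * t2) • B + (u'' - y'' * t3) • C = 0 := by
      have h2 : u'' • C + v'' • A = x'' • B + y'' • T := hRuv.trans hRxy.symm
      rw [hT3] at h2
      rw [show (v'' - y'' * t1) • A + (-x'' - y'' * t2) • B + (u'' - y'' * t3) • C
          = (u'' • C + v'' • A) - (x'' • B + y'' • (t1 • A + t2 • B + t3 • C)) by module, h2,
        sub_self]
    have h4 := h3 _ _ _ key
    constructor <;> linarith [h4.1, h4.2.2]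
  have hy'' : y'' ≠ 0 := by
    intro h
    have hR0 : R = 0 := by rw [← hRuv, hRco.1, hRco.2, h]; simp
    have := hR.2
    rw [hR0] at this
    simp [lorentz] at this
  have hsR : sRatio C R A = t1 / t3 := by
    rw [sRatio_coeff C A R hC hA hR hindCA (y'' * t3) (y'' * t1)
      (mul_ne_zero hy'' ht3) (mul_ne_zero hy'' ht1)
      (by rw [← hRco.1, ← hRco.2]; exact hRuv.symm)]
    rw [mul_div_mul_left _ _ hy'']
  rw [hsP, hsQ, hsR]
  field_simp
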